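/- For complex numbers a, b, c, d with sufficiently large real parts (so that the poles of Γ(a+s)Γ(b+s) lie to the left of the imaginary axis and those of Γ(c−s)Γ(d−s) to the right), one has ∫_{−i∞}^{i∞} Γ(a+s)Γ(b+s)Γ(c−s)Γ(d−s) ds/(2πi) = Γ(a+c)Γ(b+c)Γ(a+d)Γ(b+d)/Γ(a+b+c+d). -/

import Mathlib

open Complex MeasureTheory

namespace BarnesAux

open Real Set FourierTransform intervalIntegral

/-- `L x = log (1 + eˣ)`. -/
noncomputable def L (x : ℝ) : ℝ := Real.log (1 + Real.exp x)

/-- The basic kernel `e^{zx} (1+eˣ)^{-u}`, written in exponential form. -/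
noncomputable def F (z u : ℂ) (x : ℝ) : ℂ := Complex.exp (z * x - u * L x)

lemma one_add_exp_pos (x : ℝ) : 0 < 1 + Real.exp x := by positivity

lemma exp_L (x : ℝ) : Real.exp (L x) = 1 + Real.exp x := Real.exp_log (one_add_exp_pos x)

lemma L_neg (x : ℝ) : L (-x) = L x - x := by
  have h : 1 + Real.exp (-x) = (1 + Real.exp x) * Real.exp (-x) := by
    rw [Real.exp_neg]
    field_simp
    ring
  rw [L, h, Real.log_mul (one_add_exp_pos x).ne' (Real.exp_ne_zero _), Real.log_exp, L]
  ring

/-- The logistic map. -/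
noncomputable def phi (x : ℝ) : ℝ := Real.exp x / (1 + Real.exp x)

lemma phi_pos (x : ℝ) : 0 < phi x := div_pos (Real.exp_pos x) (one_add_exp_pos x)

lemma one_sub_phi (x : ℝ) : 1 - phi x = (1 + Real.exp x)⁻¹ := by
  rw [phi]
  field_simp
  ring

lemma one_sub_phi_pos (x : ℝ) : 0 < 1 - phi x := by
  rw [one_sub_phi]; positivity

lemma phi_lt_one (x : ℝ) : phi x < 1 := by linarith [one_sub_phi_pos x]

lemma phi_eq_exp (x : ℝ) : phi x = Real.exp (x - L x) := by
  rw [Real.exp_sub, exp_L, phi]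

lemma one_sub_phi_eq_exp (x : ℝ) : 1 - phi x = Real.exp (-L x) := by
  rw [one_sub_phi, Real.exp_neg, exp_L]

lemma phi_mul_eq_exp (x : ℝ) : phi x * (1 - phi x) = Real.exp (x - 2 * L x) := by
  rw [one_sub_phi_eq_exp, phi_eq_exp, ← Real.exp_add]
  congr 1
  ring

lemma phi_injective : Function.Injective phi := by
  intro x y hxy
  have h : (1 + Real.exp x)⁻¹ = (1 + Real.exp y)⁻¹ := by
    rw [← one_sub_phi, ← one_sub_phi, hxy]
  have h2 : 1 + Real.exp x = 1 + Real.exp y := by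
    exact inv_injective h
  exact Real.exp_injective (by linarith)

lemma phi_image : phi '' univ = Ioo (0 : ℝ) 1 := by
  apply Subset.antisymm
  · rintro y ⟨x, -, rfl⟩
    exact ⟨phi_pos x, phi_lt_one x⟩
  · rintro y ⟨hy0, hy1⟩
    refine ⟨Real.log (y / (1 - y)), mem_univ _, ?_⟩
    have h1y : 0 < 1 - y := by linarith
    have hq : 0 < y / (1 - y) := div_pos hy0 h1y
    rw [phi, Real.exp_log hq]
    field_simp
    ring

lemma hasDerivAt_L (x : ℝ) : HasDerivAt L (phi x) x := by
  have h : HasDerivAt (fun x : ℝ => 1 + Real.exp x) (Real.exp x) x :=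
    (Real.hasDerivAt_exp x).const_add 1
  exact h.log (one_add_exp_pos x).ne'

lemma hasDerivAt_phi (x : ℝ) : HasDerivAt phi (phi x * (1 - phi x)) x := by
  have h : HasDerivAt (fun x : ℝ => 1 + Real.exp x) (Real.exp x) x :=
    (Real.hasDerivAt_exp x).const_add 1
  have := (Real.hasDerivAt_exp x).div h (one_add_exp_pos x).ne'
  refine (this.congr_deriv ?_ : HasDerivAt phi _ x)
  have hne := (one_add_exp_pos x).ne'
  rw [phi]
  field_simp

lemma ofReal_cpow_of_pos {r : ℝ} (hr : 0 < r) (w : ℂ) :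
    (r : ℂ) ^ w = Complex.exp (w * Real.log r) := by
  rw [Complex.cpow_def_of_ne_zero (by exact_mod_cast hr.ne'), ← Complex.ofReal_log hr.le]
  ring_nf

lemma subst_eq (z u : ℂ) (x : ℝ) :
    (phi x * (1 - phi x)) • ((phi x : ℂ) ^ (z - 1) * (1 - (phi x : ℂ)) ^ (u - z - 1)) = F z u x := by
  have h1 : ((1 : ℂ) - (phi x : ℂ)) = ((1 - phi x : ℝ) : ℂ) := by push_cast; ring
  rw [h1, ofReal_cpow_of_pos (phi_pos x), ofReal_cpow_of_pos (one_sub_phi_pos x)]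
  have h2 : Real.log (phi x) = x - L x := by rw [phi_eq_exp, Real.log_exp]
  have h3 : Real.log (1 - phi x) = -L x := by rw [one_sub_phi_eq_exp, Real.log_exp]
  rw [h2, h3, phi_mul_eq_exp, Complex.real_smul, Complex.ofReal_exp, ← Complex.exp_add,
    ← Complex.exp_add, F]
  congr 1
  push_cast
  ring

lemma integral_F {z u : ℂ} (hz : 0 < z.re) (hzu : z.re < u.re) :
    ∫ x, F z u x = Complex.Gamma z * Complex.Gamma (u - z) / Complex.Gamma u := by
  have hu : 0 < (u - z).re := by rw [Complex.sub_re]; linarith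
  have himg := integral_image_eq_integral_abs_deriv_smul MeasurableSet.univ
      (fun x _ => (hasDerivAt_phi x).hasDerivWithinAt)
      phi_injective.injOn (fun y : ℝ => (y : ℂ) ^ (z - 1) * (1 - (y : ℂ)) ^ (u - z - 1))
  rw [phi_image] at himg
  have heq : ∀ x : ℝ, |phi x * (1 - phi x)| •
      ((phi x : ℂ) ^ (z - 1) * (1 - (phi x : ℂ)) ^ (u - z - 1)) = F z u x := by
    intro x
    rw [abs_of_pos (mul_pos (phi_pos x) (one_sub_phi_pos x)), subst_eq]
  simp only [heq, Measure.restrict_univ] at himg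
  have hbeta := Complex.Gamma_mul_Gamma_eq_betaIntegral hz hu
  have hzu' : z + (u - z) = u := by ring
  rw [hzu', Complex.betaIntegral, intervalIntegral.integral_of_le zero_le_one,
    MeasureTheory.integral_Ioc_eq_integral_Ioo, himg] at hbeta
  rw [eq_div_iff (Complex.Gamma_ne_zero_of_re_pos (hz.trans hzu)), hbeta, mul_comm]

lemma integrable_F {z u : ℂ} (hz : 0 < z.re) (hzu : z.re < u.re) : Integrable (F z u) := by
  have hu : 0 < (u - z).re := by rw [Complex.sub_re]; linarith
  have hbeta : IntegrableOn (fun y : ℝ => (y : ℂ) ^ (z - 1) * (1 - (y : ℂ)) ^ (u - z - 1))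
      (Ioo 0 1) :=
    ((intervalIntegrable_iff_integrableOn_Ioc_of_le zero_le_one).mp
      (Complex.betaIntegral_convergent hz hu)).mono_set Ioo_subset_Ioc_self
  have h := (integrableOn_image_iff_integrableOn_abs_deriv_smul MeasurableSet.univ
      (fun x _ => (hasDerivAt_phi x).hasDerivWithinAt) phi_injective.injOn
      (fun y : ℝ => (y : ℂ) ^ (z - 1) * (1 - (y : ℂ)) ^ (u - z - 1))).mp
      (by rw [phi_image]; exact hbeta)
  rw [← integrableOn_univ]
  refine h.congr_fun (fun x _ => ?_) MeasurableSet.univ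
  dsimp only
  rw [abs_of_pos (mul_pos (phi_pos x) (one_sub_phi_pos x)), subst_eq]

lemma continuous_L : Continuous L :=
  (continuous_const.add Real.continuous_exp).log fun x => (one_add_exp_pos x).ne'

lemma continuous_F (z u : ℂ) : Continuous (F z u) :=
  Complex.continuous_exp.comp
    (((continuous_const.mul Complex.continuous_ofReal).sub
      (continuous_const.mul (Complex.continuous_ofReal.comp continuous_L))))

lemma hasDerivAt_F (z u : ℂ) (x : ℝ) :
    HasDerivAt (F z u) (z * F z u x - u * F (z + 1) (u + 1) x) x := by
  have h1 : HasDerivAt (fun x : ℝ => z * (x : ℂ) - u * (L x : ℂ)) (z - u * (phi x : ℂ)) x := by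
    have hx := (hasDerivAt_id x).ofReal_comp (z := x)
    have hL := (hasDerivAt_L x).ofReal_comp (z := x)
    simpa using (hx.const_mul z).fun_sub (hL.const_mul u)
  have h2 := h1.cexp
  convert h2 using 1
  · rfl
  have h3 : (phi x : ℂ) * F z u x = F (z + 1) (u + 1) x := by
    rw [phi_eq_exp, Complex.ofReal_exp, F, F, ← Complex.exp_add]
    congr 1
    push_cast
    ring
  rw [← h3]
  simp only [F]
  ring

lemma deriv_F (z u : ℂ) :
    deriv (F z u) = fun x => z * F z u x - u * F (z + 1) (u + 1) x :=
  funext fun x => (hasDerivAt_F z u x).deriv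

lemma differentiable_F (z u : ℂ) : Differentiable ℝ (F z u) :=
  fun x => (hasDerivAt_F z u x).differentiableAt

lemma re_succ_lt {z u : ℂ} (hz : 0 < z.re) (hzu : z.re < u.re) :
    0 < (z + 1).re ∧ (z + 1).re < (u + 1).re := by
  rw [Complex.add_re, Complex.add_re, Complex.one_re]
  constructor <;> linarith

lemma integrable_deriv_F {z u : ℂ} (hz : 0 < z.re) (hzu : z.re < u.re) :
    Integrable (deriv (F z u)) := by
  rw [deriv_F]
  exact ((integrable_F hz hzu).const_mul z).sub
    ((integrable_F (re_succ_lt hz hzu).1 (re_succ_lt hz hzu).2).const_mul u)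

lemma differentiable_deriv_F (z u : ℂ) : Differentiable ℝ (deriv (F z u)) := by
  rw [deriv_F]
  exact ((differentiable_F z u).const_mul z).sub ((differentiable_F (z + 1) (u + 1)).const_mul u)

lemma deriv2_F (z u : ℂ) : deriv (deriv (F z u)) = fun x =>
    z * deriv (F z u) x - u * deriv (F (z + 1) (u + 1)) x := by
  funext x
  conv_lhs => rw [deriv_F z u]
  rw [deriv_fun_sub ((differentiable_F z u).const_mul z x) ((differentiable_F (z + 1) (u + 1)).const_mul u x),
    deriv_const_mul z (differentiable_F z u x), deriv_const_mul u (differentiable_F (z + 1) (u + 1) x)]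

lemma integrable_deriv2_F {z u : ℂ} (hz : 0 < z.re) (hzu : z.re < u.re) :
    Integrable (deriv (deriv (F z u))) := by
  rw [deriv2_F]
  exact ((integrable_deriv_F hz hzu).const_mul z).sub
    ((integrable_deriv_F (re_succ_lt hz hzu).1 (re_succ_lt hz hzu).2).const_mul u)

lemma fourier_F_eq {z w : ℂ} (hz : 0 < z.re) (hw : 0 < w.re) (ξ : ℝ) :
    𝓕 (F z (z + w)) ξ = Complex.Gamma (z - ((2 * π * ξ : ℝ) : ℂ) * Complex.I) *
      Complex.Gamma (w + ((2 * π * ξ : ℝ) : ℂ) * Complex.I) / Complex.Gamma (z + w) := by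
  have hre : (z - ((2 * π * ξ : ℝ) : ℂ) * Complex.I).re = z.re := by simp
  have h1 : 𝓕 (F z (z + w)) ξ = ∫ x, F (z - ((2 * π * ξ : ℝ) : ℂ) * Complex.I) (z + w) x := by
    rw [Real.fourier_real_eq_integral_exp_smul]
    congr 1
    funext x
    rw [smul_eq_mul, F, F, ← Complex.exp_add]
    congr 1
    push_cast
    ring
  rw [h1, integral_F (by rw [hre]; exact hz)
      (by rw [hre, Complex.add_re]; linarith),
    show z + w - (z - ((2 * π * ξ : ℝ) : ℂ) * Complex.I)
      = w + ((2 * π * ξ : ℝ) : ℂ) * Complex.I from by ring]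

lemma continuous_fourier_F {z u : ℂ} (h : Integrable (F z u)) : Continuous (𝓕 (F z u)) :=
  VectorFourier.fourierIntegral_continuous Real.continuous_fourierChar
    (by exact continuous_inner) h

set_option maxHeartbeats 2000000 in
lemma integrable_fourier_F {z u : ℂ} (hz : 0 < z.re) (hzu : z.re < u.re) :
    Integrable (𝓕 (F z u)) := by
  have hg := integrable_F hz hzu
  have hg1 := integrable_deriv_F hz hzu
  have hg2 := integrable_deriv2_F hz hzu
  have hF1 := Real.fourier_deriv hg (differentiable_F z u) hg1
  have hF2 := Real.fourier_deriv hg1 (differentiable_deriv_F z u) hg2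
  set C1 := ∫ x, ‖F z u x‖ with hC1
  set C2 := ∫ x, ‖deriv (deriv (F z u)) x‖ with hC2
  have hC1p : 0 ≤ C1 := integral_nonneg fun x => norm_nonneg _
  have hC2p : 0 ≤ C2 := integral_nonneg fun x => norm_nonneg _
  have hbound : ∀ ξ : ℝ, ‖𝓕 (F z u) ξ‖ ≤ (2 * C1 + C2 / (2 * π ^ 2)) / (1 + ξ ^ 2) := by
    intro ξ
    have hb1 : ‖𝓕 (F z u) ξ‖ ≤ C1 :=
      VectorFourier.norm_fourierIntegral_le_integral_norm _ _ _ _ _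
    have hb2 : ‖𝓕 (deriv (deriv (F z u))) ξ‖ ≤ C2 :=
      VectorFourier.norm_fourierIntegral_le_integral_norm _ _ _ _ _
    have e2 := congrFun hF2 ξ
    have e1 := congrFun hF1 ξ
    rw [e1] at e2
    have hn : ‖(2 * (π : ℂ) * Complex.I * (ξ : ℂ))‖ = 2 * π * |ξ| := by
      rw [norm_mul, norm_mul, norm_mul, Complex.norm_real, Complex.norm_real, Complex.norm_I]
      rw [Real.norm_eq_abs, Real.norm_eq_abs, _root_.abs_of_nonneg Real.pi_pos.le]
      norm_num
    have hkey : 4 * π ^ 2 * ξ ^ 2 * ‖𝓕 (F z u) ξ‖ ≤ C2 := by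
      have hsq : ‖𝓕 (deriv (deriv (F z u))) ξ‖ = (2 * π * |ξ|) ^ 2 * ‖𝓕 (F z u) ξ‖ := by
        rw [e2, smul_eq_mul, smul_eq_mul,
          show (2 * (π : ℂ) * Complex.I * (ξ : ℂ)) * ((2 * (π : ℂ) * Complex.I * (ξ : ℂ)) *
              𝓕 (F z u) ξ) = (2 * (π : ℂ) * Complex.I * (ξ : ℂ)) ^ 2 * 𝓕 (F z u) ξ from by ring,
          norm_mul, norm_pow, hn]
      have h4 : (2 * π * |ξ|) ^ 2 = 4 * π ^ 2 * ξ ^ 2 := by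
        rw [mul_pow, mul_pow, _root_.sq_abs]
        norm_num
      rw [hsq, h4] at hb2
      exact hb2
    have hA : 0 ≤ ‖𝓕 (F z u) ξ‖ := norm_nonneg _
    have hπ : 0 < π := Real.pi_pos
    have hC2div : 0 ≤ C2 / (2 * π ^ 2) := by positivity
    rw [le_div_iff₀ (by positivity)]
    rcases le_total (ξ ^ 2) 1 with h | h
    · nlinarith [mul_nonneg hA (sub_nonneg.mpr h)]
    · have h1 : 2 * ξ ^ 2 * ‖𝓕 (F z u) ξ‖ ≤ C2 / (2 * π ^ 2) := by
        rw [le_div_iff₀ (by positivity)]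
        nlinarith [hkey]
      nlinarith [h1, mul_nonneg hA (sub_nonneg.mpr h)]
  refine (integrable_inv_one_add_sq.const_mul (2 * C1 + C2 / (2 * π ^ 2))).mono'
    (continuous_fourier_F hg).aestronglyMeasurable ?_
  filter_upwards with ξ
  simpa [div_eq_mul_inv] using hbound ξ

set_option maxHeartbeats 1000000 in
lemma parseval (a b c d : ℂ) (ha : 0 < a.re) (hb : 0 < b.re) (hc : 0 < c.re) (hd : 0 < d.re) :
    ∫ ξ : ℝ, 𝓕 (F a (a + c)) ξ * 𝓕 (F b (b + d)) ξ
      = Complex.Gamma (a + d) * Complex.Gamma (b + c) / Complex.Gamma (a + b + c + d) := by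
  have hac : a.re < (a + c).re := by rw [Complex.add_re]; linarith
  have hbd : b.re < (b + d).re := by rw [Complex.add_re]; linarith
  have hf := integrable_F ha hac
  have hgI := integrable_F hb hbd
  have hh := integrable_fourier_F hb hbd
  have hflip := VectorFourier.integral_fourierIntegral_smul_eq_flip
      (e := Real.fourierChar) (μ := (volume : Measure ℝ)) (ν := (volume : Measure ℝ))
      (L := innerₗ ℝ) Real.continuous_fourierChar (by exact continuous_inner) hf hh
  have hLflip : (innerₗ ℝ).flip = innerₗ ℝ := by
    apply LinearMap.ext; intro x; apply LinearMap.ext; intro y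
    exact real_inner_comm x y
  rw [hLflip] at hflip
  have hflip' : ∫ ξ : ℝ, 𝓕 (F a (a + c)) ξ * 𝓕 (F b (b + d)) ξ
      = ∫ x : ℝ, F a (a + c) x * 𝓕 (𝓕 (F b (b + d))) x := by
    have h := hflip
    simp only [smul_eq_mul] at h
    exact h
  have hinv : ∀ x : ℝ, 𝓕 (𝓕 (F b (b + d))) x = F b (b + d) (-x) := by
    intro x
    have h1 := (continuous_F b (b + d)).fourierInv_fourier_eq hgI hh
    calc 𝓕 (𝓕 (F b (b + d))) x = 𝓕⁻ (𝓕 (F b (b + d))) (-x) := by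
          rw [Real.fourierInv_eq_fourier_neg, neg_neg]
      _ = F b (b + d) (-x) := by rw [h1]
  have hprod : ∫ x : ℝ, F a (a + c) x * 𝓕 (𝓕 (F b (b + d))) x
      = ∫ x : ℝ, F (a + d) (a + b + c + d) x := by
    congr 1
    funext x
    rw [hinv x, F, F, F, ← Complex.exp_add]
    congr 1
    rw [L_neg]
    push_cast
    ring
  rw [hflip', hprod, integral_F (by rw [Complex.add_re]; linarith)
      (by simp only [Complex.add_re]; linarith),
    show a + b + c + d - (a + d) = b + c from by ring]

end BarnesAux

open BarnesAux FourierTransform in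
theorem barnes_first_lemma (a b c d : ℂ)
    (ha : 0 < a.re) (hb : 0 < b.re) (hc : 0 < c.re) (hd : 0 < d.re) :
    (1 / (2 * Real.pi) : ℝ) • ∫ t : ℝ,
        Complex.Gamma (a + t * Complex.I) * Complex.Gamma (b + t * Complex.I) *
        Complex.Gamma (c - t * Complex.I) * Complex.Gamma (d - t * Complex.I)
      = Complex.Gamma (a + c) * Complex.Gamma (b + c) *
        Complex.Gamma (a + d) * Complex.Gamma (b + d) /
        Complex.Gamma (a + b + c + d) := by
  have hπ : (0 : ℝ) < Real.pi := Real.pi_pos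
  have key := parseval a b c d ha hb hc hd
  have hGac : Complex.Gamma (a + c) ≠ 0 :=
    Complex.Gamma_ne_zero_of_re_pos (by rw [Complex.add_re]; linarith)
  have hGbd : Complex.Gamma (b + d) ≠ 0 :=
    Complex.Gamma_ne_zero_of_re_pos (by rw [Complex.add_re]; linarith)
  have hpt : ∀ t : ℝ, Complex.Gamma (a + t * Complex.I) * Complex.Gamma (b + t * Complex.I) *
      Complex.Gamma (c - t * Complex.I) * Complex.Gamma (d - t * Complex.I)
      = Complex.Gamma (a + c) * Complex.Gamma (b + d) *
        (𝓕 (F a (a + c)) (-(2 * Real.pi)⁻¹ * t) * 𝓕 (F b (b + d)) (-(2 * Real.pi)⁻¹ * t)) := by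
    intro t
    rw [fourier_F_eq ha hc, fourier_F_eq hb hd]
    have h2 : ((2 * Real.pi * (-(2 * Real.pi)⁻¹ * t) : ℝ) : ℂ) = -(t : ℂ) := by
      have hr : (2 * Real.pi * (-(2 * Real.pi)⁻¹ * t) : ℝ) = -t := by
        field_simp
      rw [hr, Complex.ofReal_neg]
    rw [h2, show a - -(t : ℂ) * Complex.I = a + t * Complex.I from by ring,
      show c + -(t : ℂ) * Complex.I = c - t * Complex.I from by ring,
      show b - -(t : ℂ) * Complex.I = b + t * Complex.I from by ring,
      show d + -(t : ℂ) * Complex.I = d - t * Complex.I from by ring]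
    field_simp
  have h1 : ∫ t : ℝ, Complex.Gamma (a + t * Complex.I) * Complex.Gamma (b + t * Complex.I) *
      Complex.Gamma (c - t * Complex.I) * Complex.Gamma (d - t * Complex.I)
      = ∫ t : ℝ, Complex.Gamma (a + c) * Complex.Gamma (b + d) *
        ((fun ξ : ℝ => 𝓕 (F a (a + c)) ξ * 𝓕 (F b (b + d)) ξ) (-(2 * Real.pi)⁻¹ * t)) := by
    congr 1
    funext t
    exact hpt t
  rw [h1, integral_const_mul, MeasureTheory.Measure.integral_comp_mul_left
      (fun ξ : ℝ => 𝓕 (F a (a + c)) ξ * 𝓕 (F b (b + d)) ξ) (-(2 * Real.pi)⁻¹), key]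
  have habs : |(-(2 * Real.pi)⁻¹)⁻¹| = 2 * Real.pi := by
    rw [inv_neg, inv_inv, abs_neg, abs_of_pos (by linarith)]
  rw [habs, mul_smul_comm, smul_smul]
  rw [show (1 / (2 * Real.pi)) * (2 * Real.pi) = 1 from by field_simp, one_smul]
  field_simp
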